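/- For any vector v : Fin (2*n) → ℕ with monotone nondecreasing rearrangement w, the 'twist' of w, defined as (∑_{i=n}^{2n-1} w(i)) − (∑_{i=0}^{n-1} w(i)) (as an integer), is greater than or equal to the twist of v, i.e., (∑_{i=n}^{2n-1} v(i)) − (∑_{i=0}^{n-1} v(i)) ≤ (∑_{i=n}^{2n-1} w(i)) − (∑_{i=0}^{n-1} w(i)). -/
import Mathlib

open Finset

lemma lower_set_eq (n : ℕ) :
    (Finset.univ.filter (fun i : Fin (2 * n) => (i : ℕ) < n)) =
      (Finset.univ : Finset (Fin n)).map (Fin.castLEEmb (by omega)) := by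
  ext i
  simp only [mem_filter, mem_univ, true_and, mem_map, Fin.castLEEmb]
  constructor
  · intro h
    exact ⟨⟨i, h⟩, by simp [Fin.ext_iff]⟩
  · rintro ⟨j, rfl⟩
    exact j.isLt

lemma min_sum (n : ℕ) (w : Fin (2 * n) → ℕ) (hmono : Monotone w)
    (B : Finset (Fin (2 * n))) (hB : B.card = n) :
    ∑ i ∈ Finset.univ.filter (fun i : Fin (2 * n) => (i : ℕ) < n), (w i : ℤ) ≤
      ∑ i ∈ B, (w i : ℤ) := by
  rw [lower_set_eq, Finset.sum_map]
  have hBmap : (Finset.univ : Finset (Fin n)).map (B.orderEmbOfFin hB).toEmbedding = B := by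
    apply Finset.eq_of_subset_of_card_le
    · intro x hx
      simp only [Finset.mem_map, Finset.mem_univ, true_and] at hx
      obtain ⟨j, rfl⟩ := hx
      exact Finset.orderEmbOfFin_mem B hB j
    · simp [hB]
  rw [← hBmap, Finset.sum_map]
  apply Finset.sum_le_sum
  intro j _
  have key : ∀ m : ℕ, ∀ h : m < n, m ≤ ((B.orderEmbOfFin hB ⟨m, h⟩ : Fin (2 * n)) : ℕ) := by
    intro m
    induction m with
    | zero => intro h; exact Nat.zero_le _
    | succ k ih =>
      intro h
      have h1 := ih (by omega)
      have h2 : B.orderEmbOfFin hB ⟨k, by omega⟩ < B.orderEmbOfFin hB ⟨k + 1, h⟩ :=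
        (B.orderEmbOfFin hB).strictMono (by simp [Fin.lt_def])
      rw [Fin.lt_def] at h2
      omega
  have hjle : ((Fin.castLEEmb (show n ≤ 2 * n by omega) j : Fin (2 * n)) : ℕ) ≤
      ((B.orderEmbOfFin hB j : Fin (2 * n)) : ℕ) := by
    simpa using key j j.isLt
  exact_mod_cast hmono hjle

theorem sorted_twist_ge (n : ℕ) (v w : Fin (2 * n) → ℕ) (σ : Equiv.Perm (Fin (2 * n)))
    (hperm : w = v ∘ σ) (hmono : Monotone w) :
    (∑ i ∈ Finset.univ.filter (fun i : Fin (2 * n) => n ≤ (i : ℕ)), (v i : ℤ)) -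
        ∑ i ∈ Finset.univ.filter (fun i : Fin (2 * n) => (i : ℕ) < n), (v i : ℤ) ≤
      (∑ i ∈ Finset.univ.filter (fun i : Fin (2 * n) => n ≤ (i : ℕ)), (w i : ℤ)) -
        ∑ i ∈ Finset.univ.filter (fun i : Fin (2 * n) => (i : ℕ) < n), (w i : ℤ) := by
  set S := Finset.univ.filter (fun i : Fin (2 * n) => (i : ℕ) < n) with hS
  set T := Finset.univ.filter (fun i : Fin (2 * n) => n ≤ (i : ℕ)) with hT
  have hvw : ∀ i, v i = w (σ.symm i) := by
    intro i; rw [hperm]; simp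
  have hST : ∀ f : Fin (2 * n) → ℤ, ∑ i ∈ T, f i = ∑ i, f i - ∑ i ∈ S, f i := by
    intro f
    have : S ∪ T = Finset.univ := by
      ext i; simp [hS, hT]; omega
    have hdisj : Disjoint S T := by
      rw [Finset.disjoint_filter]
      intro i _ h; omega
    rw [← this, Finset.sum_union hdisj]; ring
  have htot : ∑ i, (v i : ℤ) = ∑ i, (w i : ℤ) := by
    rw [hperm]; exact (Equiv.sum_comp σ (fun i => (v i : ℤ))).symm
  have hSv : ∑ i ∈ S, (v i : ℤ) = ∑ j ∈ S.image σ.symm, (w j : ℤ) := by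
    rw [Finset.sum_image (fun a _ b _ h => σ.symm.injective h)]
    exact Finset.sum_congr rfl (fun i _ => by rw [hvw])
  have hcardS : S.card = n := by
    rw [hS, lower_set_eq]; simp
  have hcard : (S.image σ.symm).card = n := by
    rw [Finset.card_image_of_injective _ σ.symm.injective, hcardS]
  have hmin : ∑ i ∈ S, (w i : ℤ) ≤ ∑ i ∈ S, (v i : ℤ) := by
    rw [hSv]; exact min_sum n w hmono _ hcard
  rw [hST (fun i => (v i : ℤ)), hST (fun i => (w i : ℤ)), htot]
  linarith
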